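/- Let p > 2, β > 0 and ω > 0. Then there exists a unique pair (t_−, t_+) with 0 < t_− < t_+ < 1 solving the system t_+(1−t_+²)^{1/(p−2)} = t_−(1−t_−²)^{1/(p−2)} and 1/t_+ − 1/t_− = −β√ω; moreover this solution satisfies 0 < t_− < √((p−2)/p) < t_+ < 1. -/

import Mathlib

open Set

noncomputable def Ftr (q t : ℝ) : ℝ := t * (1 - t ^ 2) ^ q

lemma continuousAt_Ftr {q : ℝ} (hq : 0 < q) (t : ℝ) : ContinuousAt (Ftr q) t := by
  have h2 : ContinuousAt (fun t : ℝ => 1 - t ^ 2) t := by fun_prop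
  exact continuousAt_id.mul (h2.rpow_const (Or.inr hq.le))

lemma hasDerivAt_Ftr {q : ℝ} {t : ℝ} (ht : t ^ 2 < 1) :
    HasDerivAt (Ftr q) ((1 - t ^ 2) ^ (q - 1) * (1 - (1 + 2 * q) * t ^ 2)) t := by
  have hbase : (0:ℝ) < 1 - t ^ 2 := by linarith
  have h1 : HasDerivAt (fun t : ℝ => 1 - t ^ 2) (-(2 * t)) t := by
    simpa using ((hasDerivAt_pow 2 t).const_sub 1)
  have h2 : HasDerivAt (fun t : ℝ => (1 - t ^ 2) ^ q)
      (-(2 * t) * q * (1 - t ^ 2) ^ (q - 1)) t :=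
    h1.rpow_const (Or.inl hbase.ne')
  have h3 := (hasDerivAt_id t).mul h2
  have hsplit : (1 - t ^ 2) ^ q = (1 - t ^ 2) ^ (q - 1) * (1 - t ^ 2) := by
    rw [← Real.rpow_add_one hbase.ne' (q - 1)]
    norm_num
  simp only [id_eq] at h3
  exact h3.congr_deriv (by rw [hsplit]; ring)

lemma Ftr_mono {q : ℝ} (hq : 0 < q) :
    StrictMonoOn (Ftr q) (Icc 0 (Real.sqrt (1 / (1 + 2 * q)))) := by
  have h2q : (0:ℝ) < 1 + 2 * q := by linarith
  apply strictMonoOn_of_deriv_pos (convex_Icc _ _)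
  · exact fun x _ => (continuousAt_Ftr hq x).continuousWithinAt
  · intro x hx
    rw [interior_Icc] at hx
    obtain ⟨hx0, hxs⟩ := hx
    have hsq := Real.sq_sqrt (le_of_lt (by positivity : (0:ℝ) < 1 / (1 + 2 * q)))
    have hxsq : x ^ 2 < 1 / (1 + 2 * q) := by
      nlinarith [Real.sqrt_nonneg (1 / (1 + 2 * q))]
    have hx1 : x ^ 2 < 1 := by
      have h1 : 1 / (1 + 2 * q) ≤ 1 := by
        rw [div_le_one h2q]; linarith
      linarith
    rw [(hasDerivAt_Ftr hx1).deriv]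
    apply mul_pos (Real.rpow_pos_of_pos (by linarith) _)
    have : (1 + 2 * q) * x ^ 2 < 1 := by
      rw [← lt_div_iff₀' h2q]; exact hxsq
    linarith

lemma Ftr_anti {q : ℝ} (hq : 0 < q) :
    StrictAntiOn (Ftr q) (Ico (Real.sqrt (1 / (1 + 2 * q))) 1) := by
  have h2q : (0:ℝ) < 1 + 2 * q := by linarith
  apply strictAntiOn_of_deriv_neg (convex_Ico _ _)
  · exact fun x _ => (continuousAt_Ftr hq x).continuousWithinAt
  · intro x hx
    rw [interior_Ico] at hx
    obtain ⟨hxs, hx1'⟩ := hx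
    have hsq := Real.sq_sqrt (le_of_lt (by positivity : (0:ℝ) < 1 / (1 + 2 * q)))
    have hx0 : 0 ≤ x := le_trans (Real.sqrt_nonneg _) hxs.le
    have hxsq : 1 / (1 + 2 * q) < x ^ 2 := by
      nlinarith [Real.sqrt_nonneg (1 / (1 + 2 * q))]
    have hx1 : x ^ 2 < 1 := by nlinarith
    rw [(hasDerivAt_Ftr hx1).deriv]
    apply mul_neg_of_pos_of_neg (Real.rpow_pos_of_pos (by linarith) _)
    have : 1 < (1 + 2 * q) * x ^ 2 := by
      rw [← div_lt_iff₀' h2q]; exact hxsq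
    linarith

set_option maxHeartbeats 2000000 in
/-- for p > 2, β > 0, ω > 0 there is a unique pair `0 < t₋ < t₊ < 1` solving
`t₊(1−t₊²)^{1/(p−2)} = t₋(1−t₋²)^{1/(p−2)}` and `1/t₊ − 1/t₋ = −β√ω`; moreover
`0 < t₋ < √((p−2)/p) < t₊ < 1`. -/
theorem transmission_system_unique_solution (p β ω : ℝ) (hp : 2 < p) (hβ : 0 < β)
    (hω : 0 < ω) :
    ∃ tm tp : ℝ,
      (0 < tm ∧ tm < tp ∧ tp < 1 ∧
        tp * (1 - tp ^ 2) ^ (1 / (p - 2)) = tm * (1 - tm ^ 2) ^ (1 / (p - 2)) ∧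
        1 / tp - 1 / tm = -β * Real.sqrt ω) ∧
      tm < Real.sqrt ((p - 2) / p) ∧ Real.sqrt ((p - 2) / p) < tp ∧
      ∀ sm sp : ℝ, 0 < sm → sm < sp → sp < 1 →
        sp * (1 - sp ^ 2) ^ (1 / (p - 2)) = sm * (1 - sm ^ 2) ^ (1 / (p - 2)) →
        1 / sp - 1 / sm = -β * Real.sqrt ω → sm = tm ∧ sp = tp := by
  set q : ℝ := 1 / (p - 2) with hqdef
  have hq : 0 < q := by rw [hqdef]; exact div_pos one_pos (by linarith)
  set c : ℝ := β * Real.sqrt ω with hcdef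
  have hc : 0 < c := mul_pos hβ (Real.sqrt_pos.mpr hω)
  have hneg : -β * Real.sqrt ω = -c := by rw [hcdef]; ring
  rw [hneg]
  have h2q : (0:ℝ) < 1 + 2 * q := by linarith
  set s : ℝ := Real.sqrt (1 / (1 + 2 * q)) with hsdef
  have hp2 : p - 2 ≠ 0 := by linarith
  have h2q' : 1 + 2 * q = p / (p - 2) := by
    rw [hqdef, eq_div_iff hp2]
    field_simp
    ring
  have hsarg : (p - 2) / p = 1 / (1 + 2 * q) := by
    rw [h2q', one_div_div]
  have hs_eq : Real.sqrt ((p - 2) / p) = s := by rw [hsarg]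
  rw [hs_eq]
  have hs0 : 0 < s := Real.sqrt_pos.mpr (by positivity)
  have hsq : s ^ 2 = 1 / (1 + 2 * q) := Real.sq_sqrt (by positivity)
  have hs1 : s < 1 := by
    nlinarith [Real.sqrt_nonneg (1 / (1 + 2 * q)), (by rw [div_lt_one h2q]; linarith :
      1 / (1 + 2 * q) < 1)]
  have hFmono : StrictMonoOn (Ftr q) (Icc 0 s) := by
    rw [hsdef]; exact Ftr_mono hq
  have hFanti : StrictAntiOn (Ftr q) (Ico s 1) := by
    rw [hsdef]; exact Ftr_anti hq
  clear_value q c s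
  -- properties of φ t = t / (1 + c t)
  have hφpos : ∀ t : ℝ, 0 < t → 0 < t / (1 + c * t) := by
    intro t ht; exact div_pos ht (by nlinarith)
  have hφlt : ∀ t : ℝ, 0 < t → t / (1 + c * t) < t := by
    intro t ht
    rw [div_lt_iff₀ (by nlinarith)]
    nlinarith [mul_pos hc (mul_pos ht ht)]
  have hφmono : ∀ x y : ℝ, 0 ≤ x → x < y → x / (1 + c * x) < y / (1 + c * y) := by
    intro x y hx hxy
    rw [div_lt_div_iff₀ (by nlinarith) (by nlinarith)]
    nlinarith
  -- the key uniqueness fact for any solution pair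
  have key : ∀ sm sp : ℝ, 0 < sm → sm < sp → sp < 1 →
      Ftr q sp = Ftr q sm → 1 / sp - 1 / sm = -c →
      sm = sp / (1 + c * sp) ∧ sm < s ∧ s < sp := by
    intro sm sp hsm0 hsmsp hsp1 heq hsec
    have hsp0 : 0 < sp := lt_trans hsm0 hsmsp
    have hsm_eq : sm = sp / (1 + c * sp) := by
      have h1 : 1 / sm = 1 / sp + c := by linarith
      rw [eq_div_iff (by nlinarith : (1 + c * sp) ≠ 0)]
      field_simp at h1
      nlinarith [h1]
    have hsp_gt : s < sp := by
      by_contra hcon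
      push_neg at hcon
      have h1 : sm ∈ Icc (0:ℝ) s := ⟨hsm0.le, (lt_of_lt_of_le hsmsp hcon).le⟩
      have h2 : sp ∈ Icc (0:ℝ) s := ⟨hsp0.le, hcon⟩
      have := hFmono h1 h2 hsmsp
      linarith
    have hsm_lt : sm < s := by
      by_contra hcon
      push_neg at hcon
      have h1 : sm ∈ Ico s 1 := ⟨hcon, lt_trans hsmsp hsp1⟩
      have h2 : sp ∈ Ico s 1 := ⟨hsp_gt.le, hsp1⟩
      have := hFanti h1 h2 hsmsp
      linarith
    exact ⟨hsm_eq, hsm_lt, hsp_gt⟩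
  -- existence via IVT
  have hu1 : 1 / (1 + c) < 1 := by rw [div_lt_one (by linarith)]; linarith
  set a₀ : ℝ := s / (1 + c * s) with ha₀def
  have ha₀pos : 0 < a₀ := hφpos s hs0
  have ha₀s : a₀ < s := hφlt s hs0
  have ha₀u : a₀ < 1 / (1 + c) := by
    have h := hφmono s 1 hs0.le hs1
    have he : (1:ℝ) / (1 + c * 1) = 1 / (1 + c) := by norm_num
    rw [he] at h
    exact h
  clear_value a₀
  obtain ⟨x₀, hx₀K, hmin⟩ := isCompact_Icc.exists_isMinOn (nonempty_Icc.mpr ha₀u.le)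
    (fun x _ => (continuousAt_Ftr hq x).continuousWithinAt :
      ContinuousOn (Ftr q) (Icc a₀ (1 / (1 + c))))
  have hmin' : ∀ y ∈ Icc a₀ (1 / (1 + c)), Ftr q x₀ ≤ Ftr q y := isMinOn_iff.mp hmin
  clear hmin
  set m : ℝ := Ftr q x₀ with hmdef
  have hx₀0 : 0 < x₀ := lt_of_lt_of_le ha₀pos hx₀K.1
  have hx₀1 : x₀ < 1 := lt_of_le_of_lt hx₀K.2 hu1
  have hx₀sq : (0:ℝ) < 1 - x₀ ^ 2 := by nlinarith
  have hm : 0 < m := by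
    rw [hmdef]
    unfold Ftr
    exact mul_pos hx₀0 (Real.rpow_pos_of_pos hx₀sq _)
  clear_value m
  -- choose b near 1 with Ftr q b < m
  have hF1 : Ftr q 1 = 0 := by
    simp [Ftr, Real.zero_rpow hq.ne']
  obtain ⟨δ, hδ0, hball⟩ := Metric.continuousAt_iff.mp (continuousAt_Ftr hq 1) m hm
  set b : ℝ := max ((1 + s) / 2) (1 - δ / 2) with hbdef
  have hsb : s < b := lt_of_lt_of_le (by linarith) (le_max_left _ _)
  have hb1 : b < 1 := max_lt (by linarith) (by linarith)
  have hb0 : 0 < b := lt_trans hs0 hsb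
  have hFb : Ftr q b < m := by
    have hd : dist b 1 < δ := by
      rw [Real.dist_eq, abs_of_neg (by linarith : b - 1 < 0)]
      have := le_max_right ((1 + s) / 2) (1 - δ / 2)
      linarith
    have := hball hd
    rw [hF1, Real.dist_eq, sub_zero] at this
    exact lt_of_le_of_lt (le_abs_self _) this
  clear_value b
  set H : ℝ → ℝ := fun t => Ftr q t - Ftr q (t / (1 + c * t)) with hHdef
  have hHs : 0 < H s := by
    have h1 : a₀ ∈ Icc (0:ℝ) s := ⟨ha₀pos.le, ha₀s.le⟩
    have h2 : s ∈ Icc (0:ℝ) s := ⟨hs0.le, le_refl s⟩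
    have := hFmono h1 h2 ha₀s
    simp only [hHdef, ← ha₀def]
    linarith
  have hHb : H b < 0 := by
    have hφbK : b / (1 + c * b) ∈ Icc a₀ (1 / (1 + c)) := by
      constructor
      · rw [ha₀def]; exact (hφmono s b hs0.le hsb).le
      · have h := hφmono b 1 hb0.le hb1
        have he : (1:ℝ) / (1 + c * 1) = 1 / (1 + c) := by norm_num
        rw [he] at h
        exact h.le
    have hmle := hmin' _ hφbK
    simp only [hHdef]
    linarith
  have hHcont : ContinuousOn H (Icc s b) := by
    rw [hHdef]
    intro x hx
    have hx0 : 0 < x := lt_of_lt_of_le hs0 hx.1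
    have hφc : ContinuousAt (fun t : ℝ => t / (1 + c * t)) x := by
      apply ContinuousAt.div continuousAt_id (by fun_prop)
      nlinarith
    exact ((continuousAt_Ftr hq x).sub
      ((continuousAt_Ftr hq _).comp hφc)).continuousWithinAt
  have hmem : (0:ℝ) ∈ Icc (H b) (H s) := ⟨hHb.le, hHs.le⟩
  obtain ⟨tp, htpmem, htpH⟩ := intermediate_value_Icc' hsb.le hHcont hmem
  have htps : s < tp := by
    rcases lt_or_eq_of_le htpmem.1 with h | h
    · exact h
    · exfalso; rw [← h] at htpH; linarith
  have htpb : tp < b := by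
    rcases lt_or_eq_of_le htpmem.2 with h | h
    · exact h
    · exfalso; rw [h] at htpH; linarith
  have htp1 : tp < 1 := lt_trans htpb hb1
  have htp0 : 0 < tp := lt_trans hs0 htps
  set tm : ℝ := tp / (1 + c * tp) with htmdef
  have htm0 : 0 < tm := hφpos tp htp0
  have htmtp : tm < tp := hφlt tp htp0
  clear_value H tm
  simp only [hHdef] at htpH
  rw [← htmdef] at htpH
  have heqF : Ftr q tp = Ftr q tm := by linarith
  have hsec : 1 / tp - 1 / tm = -c := by
    rw [htmdef, one_div_div]
    field_simp
    ring
  have htms : tm < s := (key tm tp htm0 htmtp htp1 heqF hsec).2.1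
  refine ⟨tm, tp, ⟨htm0, htmtp, htp1, heqF, hsec⟩, htms, htps, ?_⟩
  intro sm sp hsm0 hsmsp hsp1 heq' hsec'
  have hsp0 : 0 < sp := lt_trans hsm0 hsmsp
  have heqF' : Ftr q sp = Ftr q sm := heq'
  obtain ⟨hsm_eq, hsm_lt, hsp_gt⟩ := key sm sp hsm0 hsmsp hsp1 heqF' hsec'
  rcases lt_trichotomy sp tp with h | h | h
  · exfalso
    have h1 : sm < tm := by
      rw [hsm_eq, htmdef]; exact hφmono sp tp hsp0.le h
    have h2 : Ftr q sm < Ftr q tm :=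
      hFmono ⟨hsm0.le, hsm_lt.le⟩ ⟨htm0.le, htms.le⟩ h1
    have h3 : Ftr q tp < Ftr q sp :=
      hFanti ⟨hsp_gt.le, hsp1⟩ ⟨htps.le, htp1⟩ h
    linarith
  · exact ⟨by rw [hsm_eq, htmdef, h], h⟩
  · exfalso
    have h1 : tm < sm := by
      rw [hsm_eq, htmdef]; exact hφmono tp sp htp0.le h
    have h2 : Ftr q tm < Ftr q sm :=
      hFmono ⟨htm0.le, htms.le⟩ ⟨hsm0.le, hsm_lt.le⟩ h1
    have h3 : Ftr q sp < Ftr q tp :=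
      hFanti ⟨htps.le, htp1⟩ ⟨hsp_gt.le, hsp1⟩ h
    linarith
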